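/- There exist constants C', c' > 0 depending only on α such that for all j ≥ C': log(φ_{j−1}(t)/φ_j(t)) ≤ −c' 2^j j^{−β} for all t ≥ a_j, and log(φ_{j+1}(t)/φ_j(t)) ≤ −c' 2^j j^{−β} for all t ≤ b_j. -/

import Mathlib

open MeasureTheory ProbabilityTheory Filter
open scoped Classical

noncomputable section

/-- `mseq α j = 2⌊j^(1/α)⌋`, the sequence `m_j` from the construction. -/
def mseq (α : ℝ) (j : ℕ) : ℕ := 2 * ⌊(j : ℝ) ^ (1 / α)⌋₊

/-- The index `j` of the block `I_j = (m_(j-1), m_j]` containing `k`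
(with the convention `m_(-1) = -1`). -/
def blockIdx (α : ℝ) (k : ℕ) : ℕ := sInf {j : ℕ | k ≤ mseq α j}

/-- The deterministic coefficient sequence: `c_k = exp (-2^j)` for `k ∈ I_j`. -/
def cseq (α : ℝ) (k : ℕ) : ℝ := Real.exp (-(2 : ℝ) ^ blockIdx α k)

/-- `j_* = max {j : I_j ∩ {0,…,n} ≠ ∅}`, the index of the block containing `n`. -/
def jStar (α : ℝ) (n : ℕ) : ℕ := blockIdx α n

/-- `β = min {1/2, (1-α)/(2α)}`. -/
def betaC (α : ℝ) : ℝ := min (1 / 2) ((1 - α) / (2 * α))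

/-- `a_j = α j^(1-1/α) 2^(j-2) (1 + j^(-β))`. -/
def aseq (α : ℝ) (j : ℕ) : ℝ :=
  α * (j : ℝ) ^ (1 - 1 / α) * (2 : ℝ) ^ ((j : ℤ) - 2) * (1 + (j : ℝ) ^ (-betaC α))

/-- `b_j = α j^(1-1/α) 2^(j-1) (1 - j^(-β))`. -/
def bseq (α : ℝ) (j : ℕ) : ℝ :=
  α * (j : ℝ) ^ (1 - 1 / α) * (2 : ℝ) ^ ((j : ℤ) - 1) * (1 - (j : ℝ) ^ (-betaC α))

/-- `φ_j(t) = c_(m_j) e^(t m_j)` with `c_(m_j) = exp (-2^j)`. -/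
def phi (α : ℝ) (j : ℕ) (t : ℝ) : ℝ := Real.exp (-(2 : ℝ) ^ j) * Real.exp (t * mseq α j)

/-- `g_n(t) = f_n(e^t) = ∑_{k=0}^n c_k ε_k e^{tk}`. -/
def gval (α : ℝ) {Ω : Type*} (ε : ℕ → Ω → ℝ) (n : ℕ) (ω : Ω) (t : ℝ) : ℝ :=
  ∑ k ∈ Finset.range (n + 1), cseq α k * ε k ω * Real.exp (t * k)

/-- `R_n`: the number of real roots of `f_n(z) = ∑_{k=0}^n c_k ε_k z^k`
(counted without multiplicity). -/
def Rroots (α : ℝ) {Ω : Type*} (ε : ℕ → Ω → ℝ) (n : ℕ) (ω : Ω) : ℕ :=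
  Set.ncard {t : ℝ | ∑ k ∈ Finset.range (n + 1), cseq α k * ε k ω * t ^ k = 0}

/-- `S_n`: the number of sign changes among `(ε_(m_0), …, ε_(m_(j_*-1)), ε_n)`. -/
def Schanges (α : ℝ) {Ω : Type*} (ε : ℕ → Ω → ℝ) (n : ℕ) (ω : Ω) : ℕ :=
  ((Finset.range (jStar α n)).filter fun j =>
    ε (mseq α j) ω * (if j + 1 < jStar α n then ε (mseq α (j + 1)) ω else ε n ω) < 0).card

/-- Bernoulli-type bound: `(1-y)^q ≥ 1 - (q+1) y`. -/
lemma bern_ge {q y : ℝ} (hq : 0 ≤ q) (hy0 : 0 ≤ y) (hy1 : y < 1) :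
    1 - (q + 1) * y ≤ (1 - y) ^ q := by
  rcases le_or_gt 1 q with h | h
  · have hb : 1 + q * (-y) ≤ (1 + -y) ^ q :=
      one_add_mul_self_le_rpow_one_add (by linarith) h
    rw [show (1 : ℝ) + -y = 1 - y from by ring] at hb
    nlinarith
  · have h2 : (1 - y) ^ (1 : ℝ) ≤ (1 - y) ^ q :=
      Real.rpow_le_rpow_of_exponent_ge (by linarith) (by linarith) h.le
    rw [Real.rpow_one] at h2
    nlinarith [mul_nonneg hq hy0]

lemma gap_lower {p a : ℝ} (hp : 1 ≤ p) (ha : 1 ≤ a) :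
    p * a ^ (p - 1) ≤ (a + 1) ^ p - a ^ p := by
  have ha0 : 0 < a := by linarith
  have hia : 0 ≤ 1 / a := by positivity
  have hap : 0 < a ^ p := Real.rpow_pos_of_pos ha0 _
  have hb : 1 + p * (1 / a) ≤ (1 + 1 / a) ^ p :=
    one_add_mul_self_le_rpow_one_add (by linarith) hp
  have h1 : (1 : ℝ) + 1 / a = (a + 1) / a := by field_simp
  have h2 : ((a + 1) / a) ^ p = (a + 1) ^ p / a ^ p := Real.div_rpow (by linarith) ha0.le _
  rw [h1, h2] at hb
  have h4 := mul_le_mul_of_nonneg_right hb hap.le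
  rw [div_mul_cancel₀ _ hap.ne'] at h4
  have h3 : a ^ (p - 1) = a ^ p / a := by rw [Real.rpow_sub ha0, Real.rpow_one]
  have h5 : (1 + p * (1 / a)) * a ^ p = a ^ p + p * (a ^ p / a) := by
    field_simp
  rw [h5] at h4
  rw [h3]; linarith

lemma gap_upper {p a : ℝ} (hp : 1 ≤ p) (ha : 1 ≤ a) :
    (a + 1) ^ p - a ^ p ≤ p * (a + 1) ^ (p - 1) := by
  have ha1 : 0 < a + 1 := by linarith
  have hap : 0 < (a + 1) ^ p := Real.rpow_pos_of_pos ha1 _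
  have hd1 : 1 / (a + 1) ≤ 1 := by rw [div_le_one ha1]; linarith
  have hb : 1 + p * (-(1 / (a + 1))) ≤ (1 + -(1 / (a + 1))) ^ p :=
    one_add_mul_self_le_rpow_one_add (by linarith) hp
  have h1 : (1 : ℝ) + -(1 / (a + 1)) = a / (a + 1) := by field_simp; ring
  have h2 : (a / (a + 1)) ^ p = a ^ p / (a + 1) ^ p := Real.div_rpow (by linarith) ha1.le _
  rw [h1, h2] at hb
  have h4 := mul_le_mul_of_nonneg_right hb hap.le
  rw [div_mul_cancel₀ _ hap.ne'] at h4
  have h3 : (a + 1) ^ (p - 1) = (a + 1) ^ p / (a + 1) := by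
    rw [Real.rpow_sub ha1, Real.rpow_one]
  have h5 : (1 + p * (-(1 / (a + 1)))) * (a + 1) ^ p
      = (a + 1) ^ p - p * ((a + 1) ^ p / (a + 1)) := by field_simp; ring
  rw [h5] at h4
  rw [h3]; linarith

lemma ratio_lower {p x : ℝ} (hp : 1 ≤ p) (hx : 2 ≤ x) :
    1 - p * (1 / x) ≤ x ^ (1 - p) * (x - 1) ^ (p - 1) := by
  have hx0 : 0 < x := by linarith
  have h0 : 0 ≤ 1 - 1 / x := by
    rw [sub_nonneg, div_le_one hx0]; linarith
  have h1 : x - 1 = x * (1 - 1 / x) := by field_simp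
  have h2 : (x - 1) ^ (p - 1) = x ^ (p - 1) * (1 - 1 / x) ^ (p - 1) := by
    rw [h1, Real.mul_rpow hx0.le h0]
  have h3 : x ^ (1 - p) * x ^ (p - 1) = 1 := by
    rw [← Real.rpow_add hx0]; norm_num
  have h4 := bern_ge (q := p - 1) (y := 1 / x) (by linarith) (by positivity)
    (by rw [div_lt_one hx0]; linarith)
  rw [show p - 1 + 1 = p from by ring] at h4
  calc 1 - p * (1 / x) ≤ (1 - 1 / x) ^ (p - 1) := h4
    _ = x ^ (1 - p) * x ^ (p - 1) * (1 - 1 / x) ^ (p - 1) := by rw [h3, one_mul]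
    _ = x ^ (1 - p) * (x - 1) ^ (p - 1) := by rw [h2]; ring

lemma ratio_upper {p x : ℝ} (hp : 1 ≤ p) (hx2 : 2 ≤ x) (hx : 2 * p ≤ x) :
    x ^ (1 - p) * (x + 1) ^ (p - 1) ≤ 1 + 2 * (p * (1 / x)) := by
  have hx0 : 0 < x := by linarith
  have hx1 : 0 < x + 1 := by linarith
  have h1 : x + 1 = x * (1 + 1 / x) := by field_simp
  have h2 : (x + 1) ^ (p - 1) = x ^ (p - 1) * (1 + 1 / x) ^ (p - 1) := by
    rw [h1, Real.mul_rpow hx0.le (by positivity)]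
  have h3 : x ^ (1 - p) * x ^ (p - 1) = 1 := by
    rw [← Real.rpow_add hx0]; norm_num
  have hA : x ^ (1 - p) * (x + 1) ^ (p - 1) = (1 + 1 / x) ^ (p - 1) := by
    rw [h2, ← mul_assoc, h3, one_mul]
  have hApos : 0 < (1 + 1 / x) ^ (p - 1) := Real.rpow_pos_of_pos (by positivity) _
  have hB := bern_ge (q := p - 1) (y := 1 / (x + 1)) (by linarith) (by positivity)
    (by rw [div_lt_one hx1]; linarith)
  rw [show p - 1 + 1 = p from by ring] at hB
  have h0 : (0 : ℝ) ≤ 1 - 1 / (x + 1) := by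
    rw [sub_nonneg, div_le_one hx1]; linarith
  have hprod : (1 + 1 / x) ^ (p - 1) * (1 - 1 / (x + 1)) ^ (p - 1) = 1 := by
    rw [← Real.mul_rpow (by positivity) h0,
      show (1 + 1 / x) * (1 - 1 / (x + 1)) = 1 from by field_simp; ring]
    exact Real.one_rpow _
  have hw0 : 0 ≤ p * (1 / x) := by positivity
  have hw2 : p * (1 / x) ≤ 1 / 2 := by
    rw [mul_one_div, div_le_iff₀ hx0]; linarith
  have hd : 1 / (x + 1) ≤ 1 / x := by
    apply one_div_le_one_div_of_le hx0; linarith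
  have hp0 : (0 : ℝ) ≤ p := by linarith
  have hlb : 1 - p * (1 / x) ≤ (1 - 1 / (x + 1)) ^ (p - 1) := by
    refine le_trans ?_ hB
    nlinarith [mul_le_mul_of_nonneg_left hd hp0]
  have h6 : (1 + 1 / x) ^ (p - 1) * (1 - p * (1 / x)) ≤ 1 := by
    calc (1 + 1 / x) ^ (p - 1) * (1 - p * (1 / x))
        ≤ (1 + 1 / x) ^ (p - 1) * (1 - 1 / (x + 1)) ^ (p - 1) :=
          mul_le_mul_of_nonneg_left hlb hApos.le
      _ = 1 := hprod
  rw [hA]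
  have h7 : (0 : ℝ) < 1 - p * (1 / x) := by linarith
  have h8 : (0 : ℝ) ≤ 1 - 2 * (p * (1 / x)) := by linarith
  nlinarith [h6, hw0, h7, h8, hApos.le]

lemma core1 (p P u w t D L aj : ℝ) (hP : 0 < P) (hp : 1 ≤ p)
    (hu0 : 0 < u) (hu1 : u ≤ 1) (hub : (4 * p + 4) * u ≤ 1)
    (hw0 : 0 ≤ w) (hw : w ≤ p * (u * u))
    (haj : P / 2 * ((1 + u) * (1 - w - u * u)) ≤ aj * L)
    (hL0 : 0 ≤ L) (hLD : L ≤ D) (haj0 : 0 ≤ aj) (ht : aj ≤ t) :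
    P / 2 - t * D ≤ -(1 / 4) * P * u := by
  have hD0 : 0 ≤ D := hL0.trans hLD
  have h1 : aj * L ≤ aj * D := mul_le_mul_of_nonneg_left hLD haj0
  have h2 : aj * D ≤ t * D := mul_le_mul_of_nonneg_right ht hD0
  have hs : 1 - (1 + u) * (1 - w - u * u) ≤ -(u / 2) := by
    nlinarith [mul_nonneg hw0 (sub_nonneg.mpr hu1),
      mul_nonneg (mul_nonneg hu0.le hu0.le) (sub_nonneg.mpr hu1),
      mul_le_mul_of_nonneg_left hub hu0.le, hw]
  have h3 := mul_le_mul_of_nonneg_left hs (by linarith : (0 : ℝ) ≤ P / 2)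
  nlinarith [h3, haj, h1, h2]

lemma core2 (p P u w t D U bj : ℝ) (hP : 0 < P) (hp : 1 ≤ p)
    (hu0 : 0 < u) (hu1 : u ≤ 1) (hub : (4 * p + 4) * u ≤ 1)
    (hw0 : 0 ≤ w) (hw : w ≤ 2 * (p * (u * u)))
    (hbj : bj * U ≤ P * ((1 - u) * (1 + w + u * u)))
    (hD0 : 0 ≤ D) (hDU : D ≤ U) (hbj0 : 0 ≤ bj) (ht : t ≤ bj) :
    -P + t * D ≤ -(1 / 4) * P * u := by
  have h1 : t * D ≤ bj * D := mul_le_mul_of_nonneg_right ht hD0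
  have h2 : bj * D ≤ bj * U := mul_le_mul_of_nonneg_left hDU hbj0
  have hs : (1 - u) * (1 + w + u * u) - 1 ≤ -(u / 4) := by
    nlinarith [mul_nonneg hw0 hu0.le,
      mul_nonneg (mul_nonneg hu0.le hu0.le) hu0.le,
      mul_le_mul_of_nonneg_left hub hu0.le,
      mul_nonneg (by linarith : (0:ℝ) ≤ p + 2) (mul_nonneg hu0.le hu0.le), hw]
  have h3 := mul_le_mul_of_nonneg_left hs hP.le
  nlinarith [h1, h2, hbj, h3]

set_option maxHeartbeats 1000000

/-- There are constants `C', c' > 0` depending only on `α` so that for all `j ≥ C'`: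
`log (φ_(j-1)(t)/φ_j(t)) ≤ -c' 2^j j^(-β)` for all `t ≥ a_j`, and
`log (φ_(j+1)(t)/φ_j(t)) ≤ -c' 2^j j^(-β)` for all `t ≤ b_j`. -/
theorem statement8 (α : ℝ) (hα : α ∈ Set.Ioo (0 : ℝ) 1) :
    ∃ C' > (0 : ℝ), ∃ c' > (0 : ℝ), ∀ j : ℕ, C' ≤ (j : ℝ) →
      (∀ t : ℝ, aseq α j ≤ t →
        Real.log (phi α (j - 1) t / phi α j t) ≤ -c' * 2 ^ j * (j : ℝ) ^ (-betaC α)) ∧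
      (∀ t : ℝ, t ≤ bseq α j →
        Real.log (phi α (j + 1) t / phi α j t) ≤ -c' * 2 ^ j * (j : ℝ) ^ (-betaC α)) := by
  obtain ⟨hα0, hα1⟩ := hα
  have hpinv : 0 < 1 / α := by positivity
  have hp : (1 : ℝ) ≤ 1 / α := by rw [le_div_iff₀ hα0]; linarith
  have hαp : α * (1 / α) = 1 := mul_one_div_cancel hα0.ne'
  have hβ0 : 0 < betaC α := lt_min (by norm_num) (div_pos (by linarith) (by linarith))
  have hβ1 : betaC α ≤ 1 / 2 := min_le_left _ _
  have hβp : 2 * betaC α ≤ 1 / α - 1 := by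
    have h1 : betaC α ≤ (1 - α) / (2 * α) := min_le_right _ _
    have h2 : (1 - α) / (2 * α) = (1 / α - 1) / 2 := by
      rw [div_eq_div_iff (by positivity) (by norm_num)]; field_simp
    rw [h2] at h1; linarith
  have hBpos : 0 < (4 * (1 / α) + 4) ^ (1 / betaC α) :=
    Real.rpow_pos_of_pos (by positivity) _
  refine ⟨2 + 2 * (1 / α) + (4 * (1 / α) + 4) ^ (1 / betaC α), by positivity,
    1 / 4, by norm_num, ?_⟩
  intro j hj
  have hx2 : (2 : ℝ) ≤ (j : ℝ) := by nlinarith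
  have hx0 : (0 : ℝ) < (j : ℝ) := by linarith
  have hx1 : (1 : ℝ) ≤ (j : ℝ) := by linarith
  have hxp : 2 * (1 / α) ≤ (j : ℝ) := by linarith
  have hj2 : 2 ≤ j := by exact_mod_cast hx2
  have hj1 : 1 ≤ j := by omega
  set x : ℝ := (j : ℝ) with hxdef
  set u : ℝ := x ^ (-betaC α) with hudef
  have hu0 : 0 < u := Real.rpow_pos_of_pos hx0 _
  have hu1 : u ≤ 1 := Real.rpow_le_one_of_one_le_of_nonpos hx1 (by linarith)
  have hub : (4 * (1 / α) + 4) * u ≤ 1 := by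
    have h1 : (4 * (1 / α) + 4) ^ (1 / betaC α) ≤ x := by linarith
    have h3 : ((4 * (1 / α) + 4) ^ (1 / betaC α)) ^ (betaC α) ≤ x ^ (betaC α) :=
      Real.rpow_le_rpow hBpos.le h1 hβ0.le
    rw [← Real.rpow_mul (by positivity), one_div_mul_cancel hβ0.ne', Real.rpow_one] at h3
    have hxβ : 0 < x ^ betaC α := Real.rpow_pos_of_pos hx0 _
    rw [hudef, Real.rpow_neg hx0.le, ← div_eq_mul_inv, div_le_one hxβ]
    exact h3
  have huu : u * u = x ^ (-betaC α + -betaC α) := (Real.rpow_add hx0 _ _).symm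
  have hinvx : 1 / x ≤ u * u := by
    rw [huu]
    have := Real.rpow_le_rpow_of_exponent_le hx1
      (show (-1 : ℝ) ≤ -betaC α + -betaC α by linarith)
    rwa [Real.rpow_neg_one, ← one_div] at this
  have hxup : x ^ (1 - 1 / α) ≤ u * u := by
    rw [huu]
    exact Real.rpow_le_rpow_of_exponent_le hx1 (by linarith)
  have hxA0 : 0 ≤ x ^ (1 - 1 / α) := Real.rpow_nonneg hx0.le _
  have hαxA : α * x ^ (1 - 1 / α) ≤ u * u := by nlinarith
  have hPpos : (0 : ℝ) < 2 ^ j := by positivity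
  have hz2 : (2 : ℝ) ^ ((j : ℤ) - 2) = 2 ^ j / 4 := by
    rw [zpow_sub₀ (by norm_num : (2:ℝ) ≠ 0), zpow_natCast]; norm_num
  have hz1 : (2 : ℝ) ^ ((j : ℤ) - 1) = 2 ^ j / 2 := by
    rw [zpow_sub₀ (by norm_num : (2:ℝ) ≠ 0), zpow_natCast]; norm_num
  have hjm : ((j - 1 : ℕ) : ℝ) = x - 1 := by
    rw [Nat.cast_sub hj1, Nat.cast_one]
  have hc1 : (mseq α j : ℝ) = 2 * (⌊x ^ (1 / α)⌋₊ : ℝ) := by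
    rw [mseq]; push_cast; ring
  have hc0 : (mseq α (j - 1) : ℝ) = 2 * (⌊(x - 1) ^ (1 / α)⌋₊ : ℝ) := by
    rw [mseq, hjm]; push_cast; ring
  have hc2 : (mseq α (j + 1) : ℝ) = 2 * (⌊(x + 1) ^ (1 / α)⌋₊ : ℝ) := by
    rw [mseq]; push_cast; ring
  have hw0 : 0 ≤ (1 / α) * (1 / x) := by positivity
  have hw : (1 / α) * (1 / x) ≤ (1 / α) * (u * u) :=
    mul_le_mul_of_nonneg_left hinvx hpinv.le
  constructor
  · -- part 1
    intro t ht
    simp only [phi]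
    rw [← Real.exp_add, ← Real.exp_add, ← Real.exp_sub, Real.log_exp]
    have hL0 : (0 : ℝ) ≤ 2 * ((1 / α) * (x - 1) ^ (1 / α - 1) - 1) := by
      have hC1 : (1 : ℝ) ≤ (x - 1) ^ (1 / α - 1) :=
        Real.one_le_rpow (by linarith) (by linarith)
      have h9 := mul_le_mul hp hC1 zero_le_one (le_trans zero_le_one hp)
      linarith
    have hLD : 2 * ((1 / α) * (x - 1) ^ (1 / α - 1) - 1)
        ≤ (mseq α j : ℝ) - (mseq α (j - 1) : ℝ) := by
      have hg := gap_lower (p := 1 / α) (a := x - 1) hp (by linarith)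
      rw [show x - 1 + 1 = x from by ring] at hg
      have fl1 : x ^ (1 / α) - 1 ≤ (⌊x ^ (1 / α)⌋₊ : ℝ) := (Nat.sub_one_lt_floor _).le
      have fl2 : (⌊(x - 1) ^ (1 / α)⌋₊ : ℝ) ≤ (x - 1) ^ (1 / α) :=
        Nat.floor_le (Real.rpow_nonneg (by linarith) _)
      rw [hc1, hc0]; linarith
    have ha0 : 0 ≤ aseq α j := by
      rw [aseq, hz2]
      have : (0:ℝ) ≤ 1 + u := by linarith
      positivity
    have he : aseq α j * (2 * ((1 / α) * (x - 1) ^ (1 / α - 1) - 1))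
        = 2 ^ j / 2 * ((1 + u) * (x ^ (1 - 1 / α) * (x - 1) ^ (1 / α - 1)
            - α * x ^ (1 - 1 / α))) := by
      rw [aseq, hz2]
      linear_combination (2 ^ j / 2 * ((1 + u) *
        (x ^ (1 - 1 / α) * (x - 1) ^ (1 / α - 1)))) * hαp
    have haj : 2 ^ j / 2 * ((1 + u) * (1 - (1 / α) * (1 / x) - u * u))
        ≤ aseq α j * (2 * ((1 / α) * (x - 1) ^ (1 / α - 1) - 1)) := by
      rw [he]
      have hinner : 1 - (1 / α) * (1 / x) - u * u
          ≤ x ^ (1 - 1 / α) * (x - 1) ^ (1 / α - 1) - α * x ^ (1 - 1 / α) := by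
        have := ratio_lower (p := 1 / α) hp hx2
        linarith
      have h2' := mul_le_mul_of_nonneg_left hinner (by linarith : (0:ℝ) ≤ 1 + u)
      exact mul_le_mul_of_nonneg_left h2' (by positivity)
    have hcore := core1 (1 / α) (2 ^ j) u ((1 / α) * (1 / x)) t
      ((mseq α j : ℝ) - (mseq α (j - 1) : ℝ))
      (2 * ((1 / α) * (x - 1) ^ (1 / α - 1) - 1)) (aseq α j)
      hPpos hp hu0 hu1 hub hw0 hw haj hL0 hLD ha0 ht
    have hpow1 : (2 : ℝ) ^ (j - 1) * 2 = 2 ^ j := by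
      rw [← pow_succ]; congr 1; omega
    nlinarith [hcore]
  · -- part 2
    intro t ht
    simp only [phi]
    rw [← Real.exp_add, ← Real.exp_add, ← Real.exp_sub, Real.log_exp]
    have hD0 : (0 : ℝ) ≤ (mseq α (j + 1) : ℝ) - (mseq α j : ℝ) := by
      rw [sub_nonneg]
      have hmono : mseq α j ≤ mseq α (j + 1) := by
        rw [mseq, mseq]
        refine Nat.mul_le_mul_left _ (Nat.floor_le_floor ?_)
        exact Real.rpow_le_rpow (by positivity)
          (by exact_mod_cast Nat.cast_le.mpr (Nat.le_succ j)) hpinv.le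
      exact_mod_cast hmono
    have hDU : (mseq α (j + 1) : ℝ) - (mseq α j : ℝ)
        ≤ 2 * ((1 / α) * (x + 1) ^ (1 / α - 1) + 1) := by
      have hg := gap_upper (p := 1 / α) (a := x) hp hx1
      have fl1 : (⌊(x + 1) ^ (1 / α)⌋₊ : ℝ) ≤ (x + 1) ^ (1 / α) :=
        Nat.floor_le (Real.rpow_nonneg (by linarith) _)
      have fl2 : x ^ (1 / α) - 1 ≤ (⌊x ^ (1 / α)⌋₊ : ℝ) := (Nat.sub_one_lt_floor _).le
      rw [hc2, hc1]; linarith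
    have hb0 : 0 ≤ bseq α j := by
      rw [bseq, hz1]
      have h1u : (0:ℝ) ≤ 1 - u := by linarith
      have := Real.rpow_nonneg hx0.le (1 - 1 / α)
      positivity
    have he2 : bseq α j * (2 * ((1 / α) * (x + 1) ^ (1 / α - 1) + 1))
        = 2 ^ j * ((1 - u) * (x ^ (1 - 1 / α) * (x + 1) ^ (1 / α - 1)
            + α * x ^ (1 - 1 / α))) := by
      rw [bseq, hz1]
      linear_combination (2 ^ j * ((1 - u) *
        (x ^ (1 - 1 / α) * (x + 1) ^ (1 / α - 1)))) * hαp
    have hbj : bseq α j * (2 * ((1 / α) * (x + 1) ^ (1 / α - 1) + 1))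
        ≤ 2 ^ j * ((1 - u) * (1 + 2 * ((1 / α) * (1 / x)) + u * u)) := by
      rw [he2]
      have hinner : x ^ (1 - 1 / α) * (x + 1) ^ (1 / α - 1) + α * x ^ (1 - 1 / α)
          ≤ 1 + 2 * ((1 / α) * (1 / x)) + u * u := by
        have := ratio_upper (p := 1 / α) hp hx2 hxp
        linarith
      have h2' := mul_le_mul_of_nonneg_left hinner (by linarith : (0:ℝ) ≤ 1 - u)
      exact mul_le_mul_of_nonneg_left h2' (by positivity)
    have hcore := core2 (1 / α) (2 ^ j) u (2 * ((1 / α) * (1 / x))) t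
      ((mseq α (j + 1) : ℝ) - (mseq α j : ℝ))
      (2 * ((1 / α) * (x + 1) ^ (1 / α - 1) + 1)) (bseq α j)
      hPpos hp hu0 hu1 hub (by positivity) (by linarith) hbj hD0 hDU hb0 ht
    have hpow2 : (2 : ℝ) ^ (j + 1) = 2 ^ j * 2 := pow_succ 2 j
    nlinarith [hcore]
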